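/- arXiv:math/0503407 — 2 statements merged into one kernel-verified Lean document; each statement's English description precedes it below -/
import Mathlib

section
/- Let S be a partially ordered set with a simply connected extension (∼_u, ∼_l), and let x ≠ y in S. Then B_{x,y} equals the intersection of all paths from x to y. -/
open Pointwise

namespace PaperSC

variable {S : Type*}

/-- Exactly one of four propositions holds. -/
def ExactlyOne4 (p q r s : Prop) : Prop :=
  (p ∨ q ∨ r ∨ s) ∧ (p → ¬q ∧ ¬r ∧ ¬s) ∧ (q → ¬r ∧ ¬s) ∧ (r → ¬s)

/-- `x` and `y` are incomparable with respect to the strict order `lt`. -/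
def Incomp (lt : S → S → Prop) (x y : S) : Prop :=
  x ≠ y ∧ ¬ lt x y ∧ ¬ lt y x

/-- The reflexive closure of `lt`. -/
def Le' (lt : S → S → Prop) (x y : S) : Prop := x = y ∨ lt x y

/-- `x ∼ᵤ y` : `x` and `y` are incomparable and have a common upper bound. -/
def SimU (lt : S → S → Prop) (x y : S) : Prop :=
  Incomp lt x y ∧ ∃ z, Le' lt x z ∧ Le' lt y z

/-- `x ∼ₗ y` : `x` and `y` are incomparable and have a common lower bound. -/
def SimL (lt : S → S → Prop) (x y : S) : Prop :=
  Incomp lt x y ∧ ∃ z, Le' lt z x ∧ Le' lt z y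

/-- Every incomparable pair has a common upper bound or a common lower bound. -/
def StronglyConnectedRel (lt : S → S → Prop) : Prop :=
  ∀ x y, Incomp lt x y → SimU lt x y ∨ SimL lt x y

/-- Acyclicity: `x ∼ᵤ y` and `x ∼ₗ z` imply `y < z`. -/
def AcyclicRel (lt : S → S → Prop) : Prop :=
  ∀ x y z, SimU lt x y → SimL lt x z → lt y z

/-- `(u, l)` is a simply connected extension of the strict partial order `lt`. -/
structure IsSCExt (lt u l : S → S → Prop) : Prop where
  u_symm : ∀ x y, u x y → u y x
  l_symm : ∀ x y, l x y → l y x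
  exactly_one : ∀ x y, x ≠ y → ExactlyOne4 (lt x y) (lt y x) (u x y) (l x y)
  u_of_ub : ∀ x y, Incomp lt x y → (∃ z, Le' lt x z ∧ Le' lt y z) → u x y
  l_of_lb : ∀ x y, Incomp lt x y → (∃ z, Le' lt z x ∧ Le' lt z y) → l x y
  acyclic : ∀ x y z, u x y → l x z → lt y z

/-- `b` is between `a` and `c` (with respect to `lt` and the extension `(u, l)`). -/
def Btwn (lt u l : S → S → Prop) (a c b : S) : Prop :=
  (lt a c ∧ ((lt a b ∧ lt b c) ∨ (u a b ∧ l b c))) ∨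
  (lt c a ∧ ((lt c b ∧ lt b a) ∨ (u c b ∧ l b a))) ∨
  (l a c ∧ ((l a b ∧ lt b c) ∨ (l c b ∧ lt b a))) ∨
  (u a c ∧ ((u a b ∧ lt c b) ∨ (u c b ∧ lt a b)))

/-- The between set `B_{a,b}`; it equals `{a}` when `a = b`. -/
def BSet (lt u l : S → S → Prop) (a b : S) : Set S :=
  {a, b} ∪ {x | a ≠ b ∧ Btwn lt u l a b x}

/-- The set `A` is totally ordered by `lt`. -/
def IsChainRel (lt : S → S → Prop) (A : Set S) : Prop :=
  ∀ p ∈ A, ∀ q ∈ A, p = q ∨ lt p q ∨ lt q p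

/-- `x O y` iff `B_{x,y}` is totally ordered by `lt`. -/
def ORel (lt u l : S → S → Prop) (x y : S) : Prop :=
  IsChainRel lt (BSet lt u l x y)

/-- The extension is rectifiable: every between set is a finite union of `O`-classes. -/
def Rectifiable (lt u l : S → S → Prop) : Prop :=
  ∀ a b : S, a ≠ b → ∃ F : Finset S,
    (↑F : Set S) ⊆ BSet lt u l a b ∧
    ∀ x ∈ BSet lt u l a b, ∃ c ∈ F, ORel lt u l x c

/-- A path from `x` to `y`: a finite union `⋃ᵢ B_{sᵢ,tᵢ}` with `s₀ = x`, `tₙ = y`, and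
`tᵢ = sᵢ₊₁`. -/
def IsPath {S : Type*} (lt u l : S → S → Prop) (x y : S) (P : Set S) : Prop :=
  ∃ (n : ℕ) (s t : Fin (n + 1) → S),
    s 0 = x ∧ t (Fin.last n) = y ∧
    (∀ i : Fin n, t i.castSucc = s i.succ) ∧
    P = ⋃ i, BSet lt u l (s i) (t i)

section Aux

variable {S : Type*} {lt u l : S → S → Prop}

lemma of_lt' (hs : IsSCExt lt u l) {x y : S} (hxy : x ≠ y) (h : lt x y) :
    ¬ lt y x ∧ ¬ u x y ∧ ¬ l x y := by
  have h4 := hs.exactly_one x y hxy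
  unfold ExactlyOne4 at h4; tauto

lemma of_u' (hs : IsSCExt lt u l) {x y : S} (hxy : x ≠ y) (h : u x y) :
    ¬ lt x y ∧ ¬ lt y x ∧ ¬ l x y := by
  have h4 := hs.exactly_one x y hxy
  unfold ExactlyOne4 at h4; tauto

lemma of_l' (hs : IsSCExt lt u l) {x y : S} (hxy : x ≠ y) (h : l x y) :
    ¬ lt x y ∧ ¬ lt y x ∧ ¬ u x y := by
  have h4 := hs.exactly_one x y hxy
  unfold ExactlyOne4 at h4; tauto

lemma rel4 (hs : IsSCExt lt u l) {x y : S} (hxy : x ≠ y) :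
    lt x y ∨ lt y x ∨ u x y ∨ l x y := (hs.exactly_one x y hxy).1

lemma u_forced (hs : IsSCExt lt u l) {x y : S} (hxy : x ≠ y)
    (h1 : ¬ lt x y) (h2 : ¬ lt y x) {w : S} (hx : lt x w) (hy : lt y w) : u x y :=
  hs.u_of_ub x y ⟨hxy, h1, h2⟩ ⟨w, Or.inr hx, Or.inr hy⟩

lemma l_forced (hs : IsSCExt lt u l) {x y : S} (hxy : x ≠ y)
    (h1 : ¬ lt x y) (h2 : ¬ lt y x) {w : S} (hx : lt w x) (hy : lt w y) : l x y :=
  hs.l_of_lb x y ⟨hxy, h1, h2⟩ ⟨w, Or.inr hx, Or.inr hy⟩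

lemma mem_of_btwn {a c x : S} (hac : a ≠ c) (h : Btwn lt u l a c x) :
    x ∈ BSet lt u l a c :=
  Set.mem_union_right _ ⟨hac, h⟩

lemma mem_BSet_left {a c : S} : a ∈ BSet lt u l a c :=
  Set.mem_union_left _ (by simp)

lemma mem_BSet_right {a c : S} : c ∈ BSet lt u l a c :=
  Set.mem_union_left _ (by simp)

lemma btwn_comm (hs : IsSCExt lt u l) {a c x : S} (h : Btwn lt u l a c x) :
    Btwn lt u l c a x := by
  rcases h with h | h | ⟨h0, h⟩ | ⟨h0, h⟩
  · exact Or.inr (Or.inl h)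
  · exact Or.inl h
  · exact Or.inr (Or.inr (Or.inl ⟨hs.l_symm a c h0, h.symm⟩))
  · exact Or.inr (Or.inr (Or.inr ⟨hs.u_symm a c h0, h.symm⟩))

lemma mem_BSet_comm (hs : IsSCExt lt u l) {a c x : S}
    (h : x ∈ BSet lt u l a c) : x ∈ BSet lt u l c a := by
  rcases h with h | ⟨hne, hb⟩
  · simp only [Set.mem_insert_iff, Set.mem_singleton_iff] at h
    rcases h with rfl | rfl
    · exact mem_BSet_right
    · exact mem_BSet_left
  · exact Set.mem_union_right _ ⟨hne.symm, btwn_comm hs hb⟩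

lemma btwn_dual (hs : IsSCExt lt u l) {a c x : S} (h : Btwn lt u l a c x) :
    Btwn (fun p q => lt q p) l u a c x := by
  rcases h with ⟨h0, h⟩ | ⟨h0, h⟩ | ⟨h0, h⟩ | ⟨h0, h⟩
  · refine Or.inr (Or.inl ⟨h0, ?_⟩)
    rcases h with ⟨h1, h2⟩ | ⟨h1, h2⟩
    · exact Or.inl ⟨h2, h1⟩
    · exact Or.inr ⟨hs.l_symm x c h2, hs.u_symm a x h1⟩
  · refine Or.inl ⟨h0, ?_⟩
    rcases h with ⟨h1, h2⟩ | ⟨h1, h2⟩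
    · exact Or.inl ⟨h2, h1⟩
    · exact Or.inr ⟨hs.l_symm x a h2, hs.u_symm c x h1⟩
  · exact Or.inr (Or.inr (Or.inr ⟨h0, h⟩))
  · exact Or.inr (Or.inr (Or.inl ⟨h0, h⟩))

lemma btwn_of_dual (hs : IsSCExt lt u l) {a c x : S}
    (h : Btwn (fun p q => lt q p) l u a c x) : Btwn lt u l a c x := by
  rcases h with ⟨h0, h⟩ | ⟨h0, h⟩ | ⟨h0, h⟩ | ⟨h0, h⟩
  · refine Or.inr (Or.inl ⟨h0, ?_⟩)
    rcases h with ⟨h1, h2⟩ | ⟨h1, h2⟩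
    · exact Or.inl ⟨h2, h1⟩
    · exact Or.inr ⟨hs.u_symm x c h2, hs.l_symm a x h1⟩
  · refine Or.inl ⟨h0, ?_⟩
    rcases h with ⟨h1, h2⟩ | ⟨h1, h2⟩
    · exact Or.inl ⟨h2, h1⟩
    · exact Or.inr ⟨hs.u_symm x a h2, hs.l_symm c x h1⟩
  · exact Or.inr (Or.inr (Or.inr ⟨h0, h⟩))
  · exact Or.inr (Or.inr (Or.inl ⟨h0, h⟩))

lemma mem_BSet_of_dual (hs : IsSCExt lt u l) {a c x : S}
    (h : x ∈ BSet (fun p q => lt q p) l u a c) : x ∈ BSet lt u l a c := by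
  rcases h with h | ⟨hne, hb⟩
  · exact Set.mem_union_left _ h
  · exact Set.mem_union_right _ ⟨hne, btwn_of_dual hs hb⟩

lemma isSCExt_dual (hs : IsSCExt lt u l) : IsSCExt (fun p q => lt q p) l u where
  u_symm := hs.l_symm
  l_symm := hs.u_symm
  exactly_one := by
    intro x y hxy
    have h4 := hs.exactly_one x y hxy
    unfold ExactlyOne4 at h4 ⊢; tauto
  u_of_ub := by
    rintro x y ⟨hne, h1, h2⟩ ⟨w, hw1, hw2⟩
    refine hs.l_of_lb x y ⟨hne, h2, h1⟩ ⟨w, ?_, ?_⟩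
    · rcases hw1 with h | h
      · exact Or.inl h.symm
      · exact Or.inr h
    · rcases hw2 with h | h
      · exact Or.inl h.symm
      · exact Or.inr h
  l_of_lb := by
    rintro x y ⟨hne, h1, h2⟩ ⟨w, hw1, hw2⟩
    refine hs.u_of_ub x y ⟨hne, h2, h1⟩ ⟨w, ?_, ?_⟩
    · rcases hw1 with h | h
      · exact Or.inl h.symm
      · exact Or.inr h
    · rcases hw2 with h | h
      · exact Or.inl h.symm
      · exact Or.inr h
  acyclic := fun x y z h1 h2 => hs.acyclic x z y h2 h1

end Aux
section Step

variable {S : Type*} {lt u l : S → S → Prop}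

/-- Case `a < b < c`. -/
lemma stepLt1 (htr : ∀ x y z : S, lt x y → lt y z → lt x z)
    (hirr : ∀ x : S, ¬ lt x x) (hs : IsSCExt lt u l) {a b c z : S}
    (h1 : lt a b) (h2 : lt b c)
    (hbz : b ≠ z) (haz : a ≠ z) (hzc : z ≠ c) :
    b ∈ BSet lt u l a z ∪ BSet lt u l z c := by
  rcases rel4 hs hbz with hb | hb | hb | hb
  · exact Set.mem_union_left _ (mem_of_btwn haz (Or.inl ⟨htr _ _ _ h1 hb, Or.inl ⟨h1, hb⟩⟩))
  · exact Set.mem_union_right _ (mem_of_btwn hzc (Or.inl ⟨htr _ _ _ hb h2, Or.inl ⟨hb, h2⟩⟩))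
  · -- b ∼u z
    rcases rel4 hs haz with ha | ha | ha | ha
    · -- a < z : forces b ∼l z, contradiction
      have hincomp := of_u' hs hbz hb
      exact absurd (l_forced hs hbz hincomp.1 hincomp.2.1 h1 ha) hincomp.2.2
    · exact absurd (htr _ _ _ ha h1) (of_u' hs hbz hb).2.1
    · exact Set.mem_union_left _ (mem_of_btwn haz (Or.inr (Or.inr (Or.inr
        ⟨ha, Or.inr ⟨hs.u_symm b z hb, h1⟩⟩))))
    · have := hs.acyclic z b a (hs.u_symm b z hb) (hs.l_symm a z ha)
      exact absurd h1 (fun h => hirr a (htr _ _ _ h this))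
  · -- b ∼l z
    rcases rel4 hs hzc with hc | hc | hc | hc
    · have hincomp := of_l' hs hbz hb
      exact absurd (u_forced hs hbz hincomp.1 hincomp.2.1 h2 hc) hincomp.2.2
    · exact absurd (htr _ _ _ h2 hc) (of_l' hs hbz hb).1
    · have := hs.acyclic z c b hc (hs.l_symm b z hb)
      exact absurd h2 (fun h => hirr b (htr _ _ _ h this))
    · exact Set.mem_union_right _ (mem_of_btwn hzc (Or.inr (Or.inr (Or.inl
        ⟨hc, Or.inl ⟨hs.l_symm b z hb, h2⟩⟩))))

/-- Case `a < c`, `a ∼u b`, `b ∼l c`. -/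
lemma stepLt2 (htr : ∀ x y z : S, lt x y → lt y z → lt x z)
    (hirr : ∀ x : S, ¬ lt x x) (hs : IsSCExt lt u l) {a b c z : S}
    (hac : lt a c) (h1 : u a b) (h2 : l b c)
    (hbz : b ≠ z) (haz : a ≠ z) (hzc : z ≠ c) :
    b ∈ BSet lt u l a z ∪ BSet lt u l z c := by
  have hanec : a ≠ c := fun h => hirr a (h ▸ hac)
  have hba : b ≠ a := by
    rintro rfl
    exact (of_lt' hs hanec hac).2.2 h2
  have hbc : b ≠ c := by
    rintro rfl
    exact (of_lt' hs hanec hac).2.1 h1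
  rcases rel4 hs hbz with hb | hb | hb | hb
  · -- b < z
    rcases rel4 hs hzc with hc | hc | hc | hc
    · exact absurd (htr _ _ _ hb hc) (of_l' hs hbc h2).1
    · have hincomp := of_l' hs hbc h2
      exact absurd (u_forced hs hbc hincomp.1 hincomp.2.1 hb hc) hincomp.2.2
    · have := hs.acyclic c z b (hs.u_symm z c hc) (hs.l_symm b c h2)
      exact absurd hb (fun h => hirr b (htr _ _ _ h this))
    · exact Set.mem_union_right _ (mem_of_btwn hzc (Or.inr (Or.inr (Or.inl
        ⟨hc, Or.inr ⟨hs.l_symm b c h2, hb⟩⟩))))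
  · -- z < b
    rcases rel4 hs haz with ha | ha | ha | ha
    · exact absurd (htr _ _ _ ha hb) (of_u' hs (Ne.symm hba) h1).1
    · have hincomp := of_u' hs (Ne.symm hba) h1
      exact absurd (l_forced hs (Ne.symm hba) hincomp.1 hincomp.2.1 ha hb) hincomp.2.2
    · exact Set.mem_union_left _ (mem_of_btwn haz (Or.inr (Or.inr (Or.inr
        ⟨ha, Or.inl ⟨h1, hb⟩⟩))))
    · have := hs.acyclic a b z h1 ha
      exact absurd hb (fun h => hirr b (htr _ _ _ this h))
  · -- b ∼u z : z < c forced by acyclicity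
    have hzc' : lt z c := hs.acyclic b z c hb h2
    exact Set.mem_union_right _ (mem_of_btwn hzc (Or.inl ⟨hzc', Or.inr ⟨hs.u_symm b z hb, h2⟩⟩))
  · -- b ∼l z : a < z forced by acyclicity
    have haz' : lt a z := hs.acyclic b a z (hs.u_symm a b h1) hb
    exact Set.mem_union_left _ (mem_of_btwn haz (Or.inl ⟨haz', Or.inr ⟨h1, hb⟩⟩))

/-- Case `a ∼l c`, `a ∼l b`, `b < c`. -/
lemma stepL1 (htr : ∀ x y z : S, lt x y → lt y z → lt x z)
    (hirr : ∀ x : S, ¬ lt x x) (hs : IsSCExt lt u l) {a b c z : S}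
    (hac : a ≠ c) (hlac : l a c) (h1 : l a b) (h2 : lt b c)
    (hbz : b ≠ z) (haz : a ≠ z) (hzc : z ≠ c) :
    b ∈ BSet lt u l a z ∪ BSet lt u l z c := by
  have hba : b ≠ a := by
    rintro rfl
    exact (of_l' hs hac hlac).1 h2
  rcases rel4 hs hbz with hb | hb | hb | hb
  · -- b < z
    rcases rel4 hs haz with ha | ha | ha | ha
    · have hincomp := of_l' hs (Ne.symm hba) h1
      exact absurd (u_forced hs (Ne.symm hba) hincomp.1 hincomp.2.1 ha hb) hincomp.2.2
    · exact absurd (htr _ _ _ hb ha) (of_l' hs (Ne.symm hba) h1).2.1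
    · have := hs.acyclic a z b ha h1
      exact absurd hb (fun h => hirr b (htr _ _ _ h this))
    · exact Set.mem_union_left _ (mem_of_btwn haz (Or.inr (Or.inr (Or.inl
        ⟨ha, Or.inl ⟨h1, hb⟩⟩))))
  · -- z < b
    exact Set.mem_union_right _ (mem_of_btwn hzc (Or.inl ⟨htr _ _ _ hb h2, Or.inl ⟨hb, h2⟩⟩))
  · -- b ∼u z : z < a forced
    have hza : lt z a := hs.acyclic b z a hb (hs.l_symm a b h1)
    exact Set.mem_union_left _ (mem_of_btwn haz (Or.inr (Or.inl
      ⟨hza, Or.inr ⟨hs.u_symm b z hb, hs.l_symm a b h1⟩⟩)))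
  · -- b ∼l z
    rcases rel4 hs hzc with hc | hc | hc | hc
    · have hincomp := of_l' hs hbz hb
      exact absurd (u_forced hs hbz hincomp.1 hincomp.2.1 h2 hc) hincomp.2.2
    · exact absurd (htr _ _ _ h2 hc) (of_l' hs hbz hb).1
    · have := hs.acyclic z c b hc (hs.l_symm b z hb)
      exact absurd h2 (fun h => hirr b (htr _ _ _ h this))
    · exact Set.mem_union_right _ (mem_of_btwn hzc (Or.inr (Or.inr (Or.inl
        ⟨hc, Or.inl ⟨hs.l_symm b z hb, h2⟩⟩))))

lemma step (htr : ∀ x y z : S, lt x y → lt y z → lt x z)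
    (hirr : ∀ x : S, ¬ lt x x) (hs : IsSCExt lt u l) {a c b : S}
    (hb : b ∈ BSet lt u l a c) (z : S) :
    b ∈ BSet lt u l a z ∪ BSet lt u l z c := by
  by_cases hbz : b = z
  · exact Set.mem_union_left _ (hbz ▸ mem_BSet_right)
  by_cases haz : a = z
  · exact Set.mem_union_right _ (haz ▸ hb)
  by_cases hzc : z = c
  · exact Set.mem_union_left _ (hzc ▸ hb)
  rcases hb with h | ⟨hac, hbt⟩
  · simp only [Set.mem_insert_iff, Set.mem_singleton_iff] at h
    rcases h with h | h
    · exact Set.mem_union_left _ (h ▸ mem_BSet_left)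
    · exact Set.mem_union_right _ (h ▸ mem_BSet_right)
  have htr' : ∀ x y z : S, (fun p q => lt q p) x y → (fun p q => lt q p) y z →
      (fun p q => lt q p) x z := fun _ _ _ h h' => htr _ _ _ h' h
  have hs' := isSCExt_dual hs
  rcases hbt with ⟨h0, h⟩ | ⟨h0, h⟩ | ⟨h0, h⟩ | ⟨h0, h⟩
  · rcases h with ⟨h1, h2⟩ | ⟨h1, h2⟩
    · exact stepLt1 htr hirr hs h1 h2 hbz haz hzc
    · exact stepLt2 htr hirr hs h0 h1 h2 hbz haz hzc
  · -- c < a : swap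
    have key : b ∈ BSet lt u l c z ∪ BSet lt u l z a := by
      rcases h with ⟨h1, h2⟩ | ⟨h1, h2⟩
      · exact stepLt1 htr hirr hs h1 h2 hbz (Ne.symm hzc) (fun h => haz h.symm)
      · exact stepLt2 htr hirr hs h0 h1 h2 hbz (Ne.symm hzc) (fun h => haz h.symm)
    rcases key with k | k
    · exact Set.mem_union_right _ (mem_BSet_comm hs k)
    · exact Set.mem_union_left _ (mem_BSet_comm hs k)
  · -- a ∼l c
    rcases h with ⟨h1, h2⟩ | ⟨h1, h2⟩
    · exact stepL1 htr hirr hs hac h0 h1 h2 hbz haz hzc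
    · have key : b ∈ BSet lt u l c z ∪ BSet lt u l z a :=
        stepL1 htr hirr hs (Ne.symm hac) (hs.l_symm a c h0) h1 h2 hbz
          (Ne.symm hzc) (fun h => haz h.symm)
      rcases key with k | k
      · exact Set.mem_union_right _ (mem_BSet_comm hs k)
      · exact Set.mem_union_left _ (mem_BSet_comm hs k)
  · -- a ∼u c : use duality
    rcases h with ⟨h1, h2⟩ | ⟨h1, h2⟩
    · have key := stepL1 (lt := fun p q => lt q p) (u := l) (l := u)
        htr' hirr hs' hac h0 h1 h2 hbz haz hzc
      rcases key with k | k
      · exact Set.mem_union_left _ (mem_BSet_of_dual hs k)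
      · exact Set.mem_union_right _ (mem_BSet_of_dual hs k)
    · have key := stepL1 (lt := fun p q => lt q p) (u := l) (l := u)
        htr' hirr hs' (Ne.symm hac) (hs.u_symm a c h0) h1 h2 hbz
          (Ne.symm hzc) (fun h => haz h.symm)
      rcases key with k | k
      · exact Set.mem_union_right _ (mem_BSet_of_dual hs (mem_BSet_comm hs' k))
      · exact Set.mem_union_left _ (mem_BSet_of_dual hs (mem_BSet_comm hs' k))

end Step
section Main

variable {S : Type*} {lt u l : S → S → Prop}

lemma bset_subset_path (htr : ∀ x y z : S, lt x y → lt y z → lt x z)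
    (hirr : ∀ x : S, ¬ lt x x) (hs : IsSCExt lt u l) :
    ∀ (n : ℕ) (s t : Fin (n + 1) → S),
      (∀ i : Fin n, t i.castSucc = s i.succ) →
      ∀ b, b ∈ BSet lt u l (s 0) (t (Fin.last n)) →
        b ∈ ⋃ i, BSet lt u l (s i) (t i) := by
  intro n
  induction n with
  | zero =>
    intro s t _ b hb
    exact Set.mem_iUnion.2 ⟨0, hb⟩
  | succ n ih =>
    intro s t hchain b hb
    rcases step htr hirr hs hb (t 0) with h | h
    · exact Set.mem_iUnion.2 ⟨0, h⟩
    · have hb' : b ∈ BSet lt u l ((fun i : Fin (n + 1) => s i.succ) 0)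
          ((fun i : Fin (n + 1) => t i.succ) (Fin.last n)) := by
        simp only []
        rw [Fin.succ_last, ← hchain 0, Fin.castSucc_zero]
        exact h
      have hch' : ∀ i : Fin n, (fun i : Fin (n + 1) => t i.succ) i.castSucc =
          (fun i : Fin (n + 1) => s i.succ) i.succ := by
        intro i
        exact (congrArg t (Fin.succ_castSucc i)).trans (hchain i.succ)
      have := ih (fun i => s i.succ) (fun i => t i.succ) hch' b hb'
      rcases Set.mem_iUnion.1 this with ⟨i, hi⟩
      exact Set.mem_iUnion.2 ⟨i.succ, hi⟩

end Main

/-- `B_{x,y}` is the intersection of all paths from `x` to `y`. -/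
theorem stmt7 {S : Type*} [PartialOrder S] (u l : S → S → Prop)
    (hsce : IsSCExt ((· < ·) : S → S → Prop) u l) (x y : S) (hxy : x ≠ y) :
    BSet ((· < ·) : S → S → Prop) u l x y =
      ⋂₀ {P : Set S | IsPath ((· < ·) : S → S → Prop) u l x y P} := by
  have htr : ∀ a b c : S, a < b → b < c → a < c := fun _ _ _ h h' => lt_trans h h'
  have hirr : ∀ a : S, ¬ a < a := fun a => lt_irrefl a
  apply Set.Subset.antisymm
  · intro b hb
    refine Set.mem_sInter.2 ?_
    rintro P ⟨n, s, t, hs0, htl, hchain, rfl⟩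
    apply bset_subset_path htr hirr hsce n s t hchain
    rw [hs0, htl]
    exact hb
  · intro b hb
    refine hb (BSet ((· < ·) : S → S → Prop) u l x y)
      ⟨0, fun _ => x, fun _ => y, rfl, rfl, fun i => i.elim0, ?_⟩
    exact (Set.iUnion_const _).symm
end PaperSC
end

section
/- Let S be a partially ordered set with a simply connected extension (∼_u, ∼_l), and let a ≠ b in S. Then the relation O_{a,b} is an equivalence relation on B_{a,b}. -/
open Pointwise

namespace PaperSC

variable {S : Type*}

section Aux

variable {S : Type*} [PartialOrder S] {u l : S → S → Prop}

lemma le'_of_le {x y : S} (hxy : x ≤ y) : Le' ((· < ·) : S → S → Prop) x y :=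
  hxy.lt_or_eq.elim Or.inr Or.inl

lemma facts_of_u (h : IsSCExt ((· < ·) : S → S → Prop) u l) {x y : S}
    (hne : x ≠ y) (hu : u x y) : ¬ x < y ∧ ¬ y < x ∧ ¬ l x y := by
  obtain ⟨_, h1, h2, h3⟩ := h.exactly_one x y hne
  exact ⟨fun hlt => (h1 hlt).2.1 hu, fun hlt => (h2 hlt).1 hu, h3 hu⟩

lemma facts_of_l (h : IsSCExt ((· < ·) : S → S → Prop) u l) {x y : S}
    (hne : x ≠ y) (hl : l x y) : ¬ x < y ∧ ¬ y < x ∧ ¬ u x y := by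
  obtain ⟨_, h1, h2, h3⟩ := h.exactly_one x y hne
  exact ⟨fun hlt => (h1 hlt).2.2 hl, fun hlt => (h2 hlt).2 hl, fun hu => h3 hu hl⟩

lemma lt_facts (h : IsSCExt ((· < ·) : S → S → Prop) u l) {x y : S}
    (hlt : x < y) : ¬ u x y ∧ ¬ l x y ∧ ¬ u y x ∧ ¬ l y x := by
  obtain ⟨_, h1, _, _⟩ := h.exactly_one x y hlt.ne
  obtain ⟨_, _, h2', _⟩ := h.exactly_one y x hlt.ne'
  exact ⟨(h1 hlt).2.1, (h1 hlt).2.2, (h2' hlt).1, (h2' hlt).2⟩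

lemma incomp_of_u (h : IsSCExt ((· < ·) : S → S → Prop) u l) {x y : S}
    (hne : x ≠ y) (hu : u x y) : Incomp ((· < ·) : S → S → Prop) x y :=
  ⟨hne, (facts_of_u h hne hu).1, (facts_of_u h hne hu).2.1⟩

lemma incomp_of_l (h : IsSCExt ((· < ·) : S → S → Prop) u l) {x y : S}
    (hne : x ≠ y) (hl : l x y) : Incomp ((· < ·) : S → S → Prop) x y :=
  ⟨hne, (facts_of_l h hne hl).1, (facts_of_l h hne hl).2.1⟩

lemma u_or_l_of_incomp (h : IsSCExt ((· < ·) : S → S → Prop) u l) {x y : S}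
    (hi : Incomp ((· < ·) : S → S → Prop) x y) : u x y ∨ l x y := by
  obtain ⟨hd, _, _, _⟩ := h.exactly_one x y hi.1
  rcases hd with hd | hd | hd | hd
  · exact absurd hd hi.2.1
  · exact absurd hd hi.2.2
  · exact Or.inl hd
  · exact Or.inr hd

lemma u_of_ub' (h : IsSCExt ((· < ·) : S → S → Prop) u l) {x y c : S}
    (hi : Incomp ((· < ·) : S → S → Prop) x y) (hx : x ≤ c) (hy : y ≤ c) : u x y :=
  h.u_of_ub x y hi ⟨c, le'_of_le hx, le'_of_le hy⟩

lemma l_of_lb' (h : IsSCExt ((· < ·) : S → S → Prop) u l) {x y c : S}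
    (hi : Incomp ((· < ·) : S → S → Prop) x y) (hx : c ≤ x) (hy : c ≤ y) : l x y :=
  h.l_of_lb x y hi ⟨c, le'_of_le hx, le'_of_le hy⟩

lemma btwn_swap (h : IsSCExt ((· < ·) : S → S → Prop) u l) {a c b : S}
    (hb : Btwn ((· < ·) : S → S → Prop) u l a c b) :
    Btwn ((· < ·) : S → S → Prop) u l c a b := by
  rcases hb with ⟨h1, h2⟩ | ⟨h1, h2⟩ | ⟨h1, h2⟩ | ⟨h1, h2⟩
  · exact Or.inr (Or.inl ⟨h1, h2⟩)
  · exact Or.inl ⟨h1, h2⟩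
  · exact Or.inr (Or.inr (Or.inl ⟨h.l_symm _ _ h1, h2.symm⟩))
  · exact Or.inr (Or.inr (Or.inr ⟨h.u_symm _ _ h1, h2.symm⟩))

lemma bset_comm (h : IsSCExt ((· < ·) : S → S → Prop) u l) (a b : S) :
    BSet ((· < ·) : S → S → Prop) u l a b = BSet ((· < ·) : S → S → Prop) u l b a := by
  ext w
  simp only [BSet, Set.mem_union, Set.mem_insert_iff, Set.mem_singleton_iff,
    Set.mem_setOf_eq]
  constructor
  · rintro ((rfl | rfl) | ⟨hne, hb⟩)
    · exact Or.inl (Or.inr rfl)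
    · exact Or.inl (Or.inl rfl)
    · exact Or.inr ⟨hne.symm, btwn_swap h hb⟩
  · rintro ((rfl | rfl) | ⟨hne, hb⟩)
    · exact Or.inl (Or.inr rfl)
    · exact Or.inl (Or.inl rfl)
    · exact Or.inr ⟨hne.symm, btwn_swap h hb⟩

lemma mem_bset_left (a b : S) : a ∈ BSet ((· < ·) : S → S → Prop) u l a b :=
  Set.mem_union_left _ (Set.mem_insert _ _)

lemma mem_bset_right (a b : S) : b ∈ BSet ((· < ·) : S → S → Prop) u l a b :=
  Set.mem_union_left _ (Set.mem_insert_of_mem _ rfl)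

lemma orel_refl (x : S) : ORel ((· < ·) : S → S → Prop) u l x x := by
  intro p hp q hq
  simp only [BSet, Set.mem_union, Set.mem_insert_iff, Set.mem_singleton_iff,
    Set.mem_setOf_eq, ne_eq, not_true_eq_false, false_and, or_false, or_self] at hp hq
  exact Or.inl (hp.trans hq.symm)

lemma orel_symm (h : IsSCExt ((· < ·) : S → S → Prop) u l) {x y : S}
    (ho : ORel ((· < ·) : S → S → Prop) u l x y) :
    ORel ((· < ·) : S → S → Prop) u l y x := by
  show IsChainRel _ (BSet ((· < ·) : S → S → Prop) u l y x)
  rw [bset_comm h]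
  exact ho

lemma comp_of_orel {x y : S} (ho : ORel ((· < ·) : S → S → Prop) u l x y) :
    x = y ∨ x < y ∨ y < x :=
  ho x (mem_bset_left x y) y (mem_bset_right x y)
/-- Key lemma: if `x < z` and `B_{x,y}`, `B_{y,z}` are chains, there is no `w`
with `u x w` and `l w z`. -/
lemma noUL (h : IsSCExt ((· < ·) : S → S → Prop) u l) {x y z w : S}
    (hxy : ORel ((· < ·) : S → S → Prop) u l x y)
    (hyz : ORel ((· < ·) : S → S → Prop) u l y z)
    (hxz : x < z) (hu : u x w) (hl : l w z) : False := by
  have hnuz : ¬ u x z := (lt_facts h hxz).1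
  have hnlz : ¬ l x z := (lt_facts h hxz).2.1
  have hwz : w ≠ z := by rintro rfl; exact hnuz hu
  have hwx : w ≠ x := by rintro rfl; exact hnlz hl
  have hixw : Incomp ((· < ·) : S → S → Prop) x w := incomp_of_u h hwx.symm hu
  have hiwz : Incomp ((· < ·) : S → S → Prop) w z := incomp_of_l h hwz hl
  have hcxy := comp_of_orel hxy
  have hcyz := comp_of_orel hyz
  by_cases hwy : w = y
  · subst hwy
    rcases hcxy with he | h1 | h1
    · exact hixw.1 he
    · exact hixw.2.1 h1
    · exact hixw.2.2 h1
  by_cases h1 : w < y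
  · rcases hcyz with he | h2 | h2
    · exact hiwz.2.1 (by rw [← he]; exact h1)
    · exact hiwz.2.1 (h1.trans h2)
    · exact (facts_of_l h hwz hl).2.2 (u_of_ub' h hiwz h1.le h2.le)
  by_cases h2 : y < w
  · rcases hcxy with he | h3 | h3
    · exact hixw.2.1 (by rw [he]; exact h2)
    · exact hixw.2.1 (h3.trans h2)
    · exact (facts_of_u h hwx.symm hu).2.2 (l_of_lb' h hixw h3.le h2.le)
  have hiwy : Incomp ((· < ·) : S → S → Prop) w y := ⟨hwy, h1, h2⟩
  rcases u_or_l_of_incomp h hiwy with h3 | h3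
  · -- u w y
    rcases hcyz with he | h4 | h4
    · have := h.acyclic w y z h3 hl
      rw [he] at this
      exact lt_irrefl _ this
    · have hbw : w ∈ BSet ((· < ·) : S → S → Prop) u l y z :=
        Set.mem_union_right _ ⟨h4.ne, Or.inl ⟨h4, Or.inr ⟨h.u_symm _ _ h3, hl⟩⟩⟩
      rcases hyz y (mem_bset_left y z) w hbw with he | h5 | h5
      · exact hiwy.1 he.symm
      · exact h2 h5
      · exact h1 h5
    · exact asymm h4 (h.acyclic w y z h3 hl)
  · -- l w y
    rcases hcxy with he | h4 | h4
    · exact (facts_of_u h hwx.symm hu).2.2 (by rw [he]; exact h.l_symm _ _ h3)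
    · have hbw : w ∈ BSet ((· < ·) : S → S → Prop) u l x y :=
        Set.mem_union_right _ ⟨h4.ne, Or.inl ⟨h4, Or.inr ⟨hu, h3⟩⟩⟩
      rcases hxy x (mem_bset_left x y) w hbw with he | h5 | h5
      · exact hixw.1 he
      · exact hixw.2.1 h5
      · exact hixw.2.2 h5
    · exact asymm h4 (h.acyclic w x y (h.u_symm _ _ hu) h3)

lemma orel_of_lt (h : IsSCExt ((· < ·) : S → S → Prop) u l) {x y z : S}
    (hxy : ORel ((· < ·) : S → S → Prop) u l x y)
    (hyz : ORel ((· < ·) : S → S → Prop) u l y z)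
    (hxz : x < z) : ORel ((· < ·) : S → S → Prop) u l x z := by
  have hb : ∀ p ∈ BSet ((· < ·) : S → S → Prop) u l x z, x ≤ p ∧ p ≤ z := by
    intro p hp
    simp only [BSet, Set.mem_union, Set.mem_insert_iff, Set.mem_singleton_iff,
      Set.mem_setOf_eq] at hp
    rcases hp with (rfl | rfl) | ⟨_, hbt⟩
    · exact ⟨le_refl _, hxz.le⟩
    · exact ⟨hxz.le, le_refl _⟩
    rcases hbt with ⟨_, hb2⟩ | ⟨hzx, _⟩ | ⟨hl0, _⟩ | ⟨hu0, _⟩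
    · rcases hb2 with ⟨h1, h2⟩ | ⟨h1, h2⟩
      · exact ⟨h1.le, h2.le⟩
      · exact (noUL h hxy hyz hxz h1 h2).elim
    · exact (asymm hxz hzx).elim
    · exact ((lt_facts h hxz).2.1 hl0).elim
    · exact ((lt_facts h hxz).1 hu0).elim
  intro p hp q hq
  by_cases hpq : p = q
  · exact Or.inl hpq
  by_cases h1 : p < q
  · exact Or.inr (Or.inl h1)
  by_cases h2 : q < p
  · exact Or.inr (Or.inr h2)
  exact absurd (l_of_lb' h ⟨hpq, h1, h2⟩ (hb p hp).1 (hb q hq).1)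
    (facts_of_u h hpq (u_of_ub' h ⟨hpq, h1, h2⟩ (hb p hp).2 (hb q hq).2)).2.2
lemma classify_lt (h : IsSCExt ((· < ·) : S → S → Prop) u l) {a b p : S}
    (hab : a < b) (hp : p ∈ BSet ((· < ·) : S → S → Prop) u l a b) :
    (a ≤ p ∧ p ≤ b) ∨
    (Incomp ((· < ·) : S → S → Prop) a p ∧ Incomp ((· < ·) : S → S → Prop) p b ∧
      u a p ∧ l p b) := by
  simp only [BSet, Set.mem_union, Set.mem_insert_iff, Set.mem_singleton_iff,
    Set.mem_setOf_eq] at hp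
  rcases hp with (rfl | rfl) | ⟨_, hbt⟩
  · exact Or.inl ⟨le_refl _, hab.le⟩
  · exact Or.inl ⟨hab.le, le_refl _⟩
  rcases hbt with ⟨_, hb2⟩ | ⟨hzx, _⟩ | ⟨hl0, _⟩ | ⟨hu0, _⟩
  · rcases hb2 with ⟨h1, h2⟩ | ⟨h1, h2⟩
    · exact Or.inl ⟨h1.le, h2.le⟩
    · have hpa : p ≠ a := by rintro rfl; exact (lt_facts h hab).2.1 h2
      have hpb : p ≠ b := by rintro rfl; exact (lt_facts h hab).1 h1
      exact Or.inr ⟨incomp_of_u h hpa.symm h1, incomp_of_l h hpb h2, h1, h2⟩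
  · exact (asymm hab hzx).elim
  · exact ((lt_facts h hab).2.1 hl0).elim
  · exact ((lt_facts h hab).1 hu0).elim

lemma classify_u (h : IsSCExt ((· < ·) : S → S → Prop) u l) {a b p : S}
    (hne : a ≠ b) (hab : u a b) (hp : p ∈ BSet ((· < ·) : S → S → Prop) u l a b) :
    p = a ∨ p = b ∨
    (Incomp ((· < ·) : S → S → Prop) a p ∧ u a p ∧ b < p) ∨
    (Incomp ((· < ·) : S → S → Prop) b p ∧ u b p ∧ a < p) := by
  have hf := facts_of_u h hne hab
  simp only [BSet, Set.mem_union, Set.mem_insert_iff, Set.mem_singleton_iff,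
    Set.mem_setOf_eq] at hp
  rcases hp with (rfl | rfl) | ⟨_, hbt⟩
  · exact Or.inl rfl
  · exact Or.inr (Or.inl rfl)
  rcases hbt with ⟨h0, _⟩ | ⟨h0, _⟩ | ⟨h0, _⟩ | ⟨_, hb2⟩
  · exact (hf.1 h0).elim
  · exact (hf.2.1 h0).elim
  · exact (hf.2.2 h0).elim
  rcases hb2 with ⟨h1, h2⟩ | ⟨h1, h2⟩
  · have hpa : a ≠ p := by rintro rfl; exact hf.2.1 h2
    exact Or.inr (Or.inr (Or.inl ⟨incomp_of_u h hpa h1, h1, h2⟩))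
  · have hpb : b ≠ p := by rintro rfl; exact hf.1 h2
    exact Or.inr (Or.inr (Or.inr ⟨incomp_of_u h hpb h1, h1, h2⟩))

lemma classify_l (h : IsSCExt ((· < ·) : S → S → Prop) u l) {a b p : S}
    (hne : a ≠ b) (hab : l a b) (hp : p ∈ BSet ((· < ·) : S → S → Prop) u l a b) :
    p = a ∨ p = b ∨
    (Incomp ((· < ·) : S → S → Prop) a p ∧ l a p ∧ p < b) ∨
    (Incomp ((· < ·) : S → S → Prop) b p ∧ l b p ∧ p < a) := by
  have hf := facts_of_l h hne hab
  simp only [BSet, Set.mem_union, Set.mem_insert_iff, Set.mem_singleton_iff,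
    Set.mem_setOf_eq] at hp
  rcases hp with (rfl | rfl) | ⟨_, hbt⟩
  · exact Or.inl rfl
  · exact Or.inr (Or.inl rfl)
  rcases hbt with ⟨h0, _⟩ | ⟨h0, _⟩ | ⟨_, hb2⟩ | ⟨h0, _⟩
  · exact (hf.1 h0).elim
  · exact (hf.2.1 h0).elim
  rotate_left
  · exact (hf.2.2 h0).elim
  rcases hb2 with ⟨h1, h2⟩ | ⟨h1, h2⟩
  · have hpa : a ≠ p := by rintro rfl; exact hf.1 h2
    exact Or.inr (Or.inr (Or.inl ⟨incomp_of_l h hpa h1, h1, h2⟩))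
  · have hpb : b ≠ p := by rintro rfl; exact hf.2.1 h2
    exact Or.inr (Or.inr (Or.inr ⟨incomp_of_l h hpb h1, h1, h2⟩))
lemma noV_lt (h : IsSCExt ((· < ·) : S → S → Prop) u l) {a b x y z : S}
    (hab : a < b)
    (hx : x ∈ BSet ((· < ·) : S → S → Prop) u l a b)
    (hy : y ∈ BSet ((· < ·) : S → S → Prop) u l a b)
    (hz : z ∈ BSet ((· < ·) : S → S → Prop) u l a b)
    (h1 : y < x) (h2 : y < z)
    (hi : Incomp ((· < ·) : S → S → Prop) x z) : False := by
  have hlxz : l x z := l_of_lb' h hi h1.le h2.le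
  have hnu : ¬ u x z := (facts_of_l h hi.1 hlxz).2.2
  rcases classify_lt h hab hx with hx' | hx'
  · rcases classify_lt h hab hz with hz' | hz'
    · exact hnu (u_of_ub' h hi hx'.2 hz'.2)
    · rcases classify_lt h hab hy with hy' | hy'
      · rcases hy'.1.lt_or_eq with h3 | h3
        · exact hz'.1.2.1 (h3.trans h2)
        · exact hz'.1.2.1 (by rw [h3]; exact h2)
      · rcases hx'.2.lt_or_eq with h3 | h3
        · exact hy'.2.1.2.1 (h1.trans h3)
        · exact hy'.2.1.2.1 (by rw [← h3]; exact h1)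
  · rcases classify_lt h hab hy with hy' | hy'
    · rcases hy'.1.lt_or_eq with h3 | h3
      · exact hx'.1.2.1 (h3.trans h1)
      · exact hx'.1.2.1 (by rw [h3]; exact h1)
    · rcases classify_lt h hab hz with hz' | hz'
      · rcases hz'.2.lt_or_eq with h3 | h3
        · exact hy'.2.1.2.1 (h2.trans h3)
        · exact hy'.2.1.2.1 (by rw [← h3]; exact h2)
      · exact hz'.1.2.1 (h.acyclic x a z (h.u_symm _ _ hx'.2.2.1) hlxz)

lemma noLam_lt (h : IsSCExt ((· < ·) : S → S → Prop) u l) {a b x y z : S}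
    (hab : a < b)
    (hx : x ∈ BSet ((· < ·) : S → S → Prop) u l a b)
    (hy : y ∈ BSet ((· < ·) : S → S → Prop) u l a b)
    (hz : z ∈ BSet ((· < ·) : S → S → Prop) u l a b)
    (h1 : x < y) (h2 : z < y)
    (hi : Incomp ((· < ·) : S → S → Prop) x z) : False := by
  have huxz : u x z := u_of_ub' h hi h1.le h2.le
  have hnl : ¬ l x z := (facts_of_u h hi.1 huxz).2.2
  rcases classify_lt h hab hx with hx' | hx'
  · rcases classify_lt h hab hz with hz' | hz'
    · exact hnl (l_of_lb' h hi hx'.1 hz'.1)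
    · rcases classify_lt h hab hy with hy' | hy'
      · rcases hy'.2.lt_or_eq with h3 | h3
        · exact hz'.2.1.2.1 (h2.trans h3)
        · exact hz'.2.1.2.1 (by rw [← h3]; exact h2)
      · rcases hx'.1.lt_or_eq with h3 | h3
        · exact hy'.1.2.1 (h3.trans h1)
        · exact hy'.1.2.1 (by rw [h3]; exact h1)
  · rcases classify_lt h hab hy with hy' | hy'
    · rcases hy'.2.lt_or_eq with h3 | h3
      · exact hx'.2.1.2.1 (h1.trans h3)
      · exact hx'.2.1.2.1 (by rw [← h3]; exact h1)
    · rcases classify_lt h hab hz with hz' | hz'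
      · rcases hz'.1.lt_or_eq with h3 | h3
        · exact hy'.1.2.1 (h3.trans h2)
        · exact hy'.1.2.1 (by rw [h3]; exact h2)
      · exact hz'.2.1.2.1 (h.acyclic x z b huxz hx'.2.2.2)

lemma noV_u (h : IsSCExt ((· < ·) : S → S → Prop) u l) {a b x y z : S}
    (hne : a ≠ b) (hab : u a b)
    (hx : x ∈ BSet ((· < ·) : S → S → Prop) u l a b)
    (hy : y ∈ BSet ((· < ·) : S → S → Prop) u l a b)
    (hz : z ∈ BSet ((· < ·) : S → S → Prop) u l a b)
    (h1 : y < x) (h2 : y < z)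
    (hi : Incomp ((· < ·) : S → S → Prop) x z) : False := by
  have hiab := incomp_of_u h hne hab
  have hlxz : l x z := l_of_lb' h hi h1.le h2.le
  rcases classify_u h hne hab hy with rfl | rfl | hy' | hy'
  · rcases classify_u h hne hab hx with rfl | rfl | hx' | hx'
    · exact lt_irrefl _ h1
    · exact hiab.2.1 h1
    · exact hx'.1.2.1 h1
    · rcases classify_u h hne hab hz with rfl | rfl | hz' | hz'
      · exact lt_irrefl _ h2
      · exact hiab.2.1 h2
      · exact hz'.1.2.1 h2
      · exact hz'.1.2.1 (h.acyclic x b z (h.u_symm _ _ hx'.2.1) hlxz)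
  · rcases classify_u h hne hab hx with rfl | rfl | hx' | hx'
    · exact hiab.2.2 h1
    · exact lt_irrefl _ h1
    · rcases classify_u h hne hab hz with rfl | rfl | hz' | hz'
      · exact hiab.2.2 h2
      · exact lt_irrefl _ h2
      · exact hz'.1.2.1 (h.acyclic x a z (h.u_symm _ _ hx'.2.1) hlxz)
      · exact hz'.1.2.1 h2
    · exact hx'.1.2.1 h1
  · -- y in branch u a y, b < y
    rcases classify_u h hne hab hx with rfl | rfl | hx' | hx'
    · exact hy'.1.2.2 h1
    · exact asymm hy'.2.2 h1
    · rcases classify_u h hne hab hz with rfl | rfl | hz' | hz'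
      · exact hy'.1.2.2 h2
      · exact asymm hy'.2.2 h2
      · exact hz'.1.2.1 (h.acyclic x a z (h.u_symm _ _ hx'.2.1) hlxz)
      · exact hz'.1.2.1 (hy'.2.2.trans h2)
    · exact hx'.1.2.1 (hy'.2.2.trans h1)
  · -- y in branch u b y, a < y
    rcases classify_u h hne hab hx with rfl | rfl | hx' | hx'
    · exact asymm hy'.2.2 h1
    · exact hy'.1.2.2 h1
    · exact hx'.1.2.1 (hy'.2.2.trans h1)
    · rcases classify_u h hne hab hz with rfl | rfl | hz' | hz'
      · exact asymm hy'.2.2 h2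
      · exact hy'.1.2.2 h2
      · exact hz'.1.2.1 (hy'.2.2.trans h2)
      · exact hz'.1.2.1 (h.acyclic x b z (h.u_symm _ _ hx'.2.1) hlxz)

lemma noLam_u (h : IsSCExt ((· < ·) : S → S → Prop) u l) {a b x y z : S}
    (hne : a ≠ b) (hab : u a b)
    (hx : x ∈ BSet ((· < ·) : S → S → Prop) u l a b)
    (hy : y ∈ BSet ((· < ·) : S → S → Prop) u l a b)
    (hz : z ∈ BSet ((· < ·) : S → S → Prop) u l a b)
    (h1 : x < y) (h2 : z < y)
    (hi : Incomp ((· < ·) : S → S → Prop) x z) : False := by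
  have hiab := incomp_of_u h hne hab
  have huxz : u x z := u_of_ub' h hi h1.le h2.le
  have hnl : ¬ l x z := (facts_of_u h hi.1 huxz).2.2
  rcases classify_u h hne hab hy with rfl | rfl | hy' | hy'
  · rcases classify_u h hne hab hx with rfl | rfl | hx' | hx'
    · exact lt_irrefl _ h1
    · exact hiab.2.2 h1
    · exact hiab.2.2 (hx'.2.2.trans h1)
    · exact asymm hx'.2.2 h1
  · rcases classify_u h hne hab hx with rfl | rfl | hx' | hx'
    · exact hiab.2.1 h1
    · exact lt_irrefl _ h1
    · exact asymm hx'.2.2 h1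
    · exact hiab.2.1 (hx'.2.2.trans h1)
  · -- y : u a y, b < y
    rcases classify_u h hne hab hx with rfl | rfl | hx' | hx'
    · exact hy'.1.2.1 h1
    · rcases classify_u h hne hab hz with rfl | rfl | hz' | hz'
      · exact hy'.1.2.1 h2
      · exact hi.1 rfl
      · exact hi.2.1 hz'.2.2
      · exact hy'.1.2.1 (hz'.2.2.trans h2)
    · rcases classify_u h hne hab hz with rfl | rfl | hz' | hz'
      · exact hy'.1.2.1 h2
      · exact hi.2.2 hx'.2.2
      · exact hnl (l_of_lb' h hi hx'.2.2.le hz'.2.2.le)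
      · exact hy'.1.2.1 (hz'.2.2.trans h2)
    · exact hy'.1.2.1 (hx'.2.2.trans h1)
  · -- y : u b y, a < y
    rcases classify_u h hne hab hx with rfl | rfl | hx' | hx'
    · rcases classify_u h hne hab hz with rfl | rfl | hz' | hz'
      · exact hi.1 rfl
      · exact hy'.1.2.1 h2
      · exact hy'.1.2.1 (hz'.2.2.trans h2)
      · exact hi.2.1 hz'.2.2
    · exact hy'.1.2.1 h1
    · exact hy'.1.2.1 (hx'.2.2.trans h1)
    · rcases classify_u h hne hab hz with rfl | rfl | hz' | hz'
      · exact hi.2.2 hx'.2.2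
      · exact hy'.1.2.1 h2
      · exact hy'.1.2.1 (hz'.2.2.trans h2)
      · exact hnl (l_of_lb' h hi hx'.2.2.le hz'.2.2.le)

lemma noV_l (h : IsSCExt ((· < ·) : S → S → Prop) u l) {a b x y z : S}
    (hne : a ≠ b) (hab : l a b)
    (hx : x ∈ BSet ((· < ·) : S → S → Prop) u l a b)
    (hy : y ∈ BSet ((· < ·) : S → S → Prop) u l a b)
    (hz : z ∈ BSet ((· < ·) : S → S → Prop) u l a b)
    (h1 : y < x) (h2 : y < z)
    (hi : Incomp ((· < ·) : S → S → Prop) x z) : False := by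
  have hiab := incomp_of_l h hne hab
  have hlxz : l x z := l_of_lb' h hi h1.le h2.le
  have hnu : ¬ u x z := (facts_of_l h hi.1 hlxz).2.2
  rcases classify_l h hne hab hy with rfl | rfl | hy' | hy'
  · rcases classify_l h hne hab hx with rfl | rfl | hx' | hx'
    · exact lt_irrefl _ h1
    · exact hiab.2.1 h1
    · exact hx'.1.2.1 h1
    · exact asymm hx'.2.2 h1
  · rcases classify_l h hne hab hx with rfl | rfl | hx' | hx'
    · exact hiab.2.2 h1
    · exact lt_irrefl _ h1
    · exact asymm hx'.2.2 h1
    · exact hx'.1.2.1 h1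
  · -- y : l a y, y < b
    rcases classify_l h hne hab hx with rfl | rfl | hx' | hx'
    · exact hy'.1.2.2 h1
    · rcases classify_l h hne hab hz with rfl | rfl | hz' | hz'
      · exact hy'.1.2.2 h2
      · exact hi.1 rfl
      · exact hi.2.2 hz'.2.2
      · exact hy'.1.2.2 (h2.trans hz'.2.2)
    · rcases classify_l h hne hab hz with rfl | rfl | hz' | hz'
      · exact hy'.1.2.2 h2
      · exact hi.2.1 hx'.2.2
      · exact hnu (u_of_ub' h hi hx'.2.2.le hz'.2.2.le)
      · exact hy'.1.2.2 (h2.trans hz'.2.2)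
    · exact hy'.1.2.2 (h1.trans hx'.2.2)
  · -- y : l b y, y < a
    rcases classify_l h hne hab hx with rfl | rfl | hx' | hx'
    · rcases classify_l h hne hab hz with rfl | rfl | hz' | hz'
      · exact hi.1 rfl
      · exact hy'.1.2.2 h2
      · exact hy'.1.2.2 (h2.trans hz'.2.2)
      · exact hi.2.2 hz'.2.2
    · exact hy'.1.2.2 h1
    · exact hy'.1.2.2 (h1.trans hx'.2.2)
    · rcases classify_l h hne hab hz with rfl | rfl | hz' | hz'
      · exact hi.2.1 hx'.2.2
      · exact hy'.1.2.2 h2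
      · exact hy'.1.2.2 (h2.trans hz'.2.2)
      · exact hnu (u_of_ub' h hi hx'.2.2.le hz'.2.2.le)

lemma noLam_l (h : IsSCExt ((· < ·) : S → S → Prop) u l) {a b x y z : S}
    (hne : a ≠ b) (hab : l a b)
    (hx : x ∈ BSet ((· < ·) : S → S → Prop) u l a b)
    (hy : y ∈ BSet ((· < ·) : S → S → Prop) u l a b)
    (hz : z ∈ BSet ((· < ·) : S → S → Prop) u l a b)
    (h1 : x < y) (h2 : z < y)
    (hi : Incomp ((· < ·) : S → S → Prop) x z) : False := by
  have hiab := incomp_of_l h hne hab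
  have huxz : u x z := u_of_ub' h hi h1.le h2.le
  rcases classify_l h hne hab hy with rfl | rfl | hy' | hy'
  · rcases classify_l h hne hab hx with rfl | rfl | hx' | hx'
    · exact lt_irrefl _ h1
    · exact hiab.2.2 h1
    · exact hx'.1.2.2 h1
    · rcases classify_l h hne hab hz with rfl | rfl | hz' | hz'
      · exact lt_irrefl _ h2
      · exact hiab.2.2 h2
      · exact hz'.1.2.2 h2
      · exact hz'.1.2.2 (h.acyclic x z b huxz (h.l_symm _ _ hx'.2.1))
  · rcases classify_l h hne hab hx with rfl | rfl | hx' | hx'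
    · exact hiab.2.1 h1
    · exact lt_irrefl _ h1
    · rcases classify_l h hne hab hz with rfl | rfl | hz' | hz'
      · exact hiab.2.1 h2
      · exact lt_irrefl _ h2
      · exact hz'.1.2.2 (h.acyclic x z a huxz (h.l_symm _ _ hx'.2.1))
      · exact hz'.1.2.2 h2
    · exact hx'.1.2.2 h1
  · -- y : l a y, y < b
    rcases classify_l h hne hab hx with rfl | rfl | hx' | hx'
    · exact hy'.1.2.1 h1
    · exact asymm hy'.2.2 h1
    · rcases classify_l h hne hab hz with rfl | rfl | hz' | hz'
      · exact hy'.1.2.1 h2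
      · exact asymm hy'.2.2 h2
      · exact hz'.1.2.2 (h.acyclic x z a huxz (h.l_symm _ _ hx'.2.1))
      · exact hz'.1.2.2 (h2.trans hy'.2.2)
    · exact hx'.1.2.2 (h1.trans hy'.2.2)
  · -- y : l b y, y < a
    rcases classify_l h hne hab hx with rfl | rfl | hx' | hx'
    · exact asymm hy'.2.2 h1
    · exact hy'.1.2.1 h1
    · exact hx'.1.2.2 (h1.trans hy'.2.2)
    · rcases classify_l h hne hab hz with rfl | rfl | hz' | hz'
      · exact asymm hy'.2.2 h2
      · exact hy'.1.2.1 h2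
      · exact hz'.1.2.2 (h2.trans hy'.2.2)
      · exact hz'.1.2.2 (h.acyclic x z b huxz (h.l_symm _ _ hx'.2.1))
lemma noV (h : IsSCExt ((· < ·) : S → S → Prop) u l) {a b x y z : S}
    (hA : a ≠ b)
    (hx : x ∈ BSet ((· < ·) : S → S → Prop) u l a b)
    (hy : y ∈ BSet ((· < ·) : S → S → Prop) u l a b)
    (hz : z ∈ BSet ((· < ·) : S → S → Prop) u l a b)
    (h1 : y < x) (h2 : y < z)
    (hi : Incomp ((· < ·) : S → S → Prop) x z) : False := by
  rcases (h.exactly_one a b hA).1 with hab | hab | hab | hab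
  · exact noV_lt h hab hx hy hz h1 h2 hi
  · refine noV_lt h hab ?_ ?_ ?_ h1 h2 hi <;> rwa [← bset_comm h]
  · exact noV_u h hA hab hx hy hz h1 h2 hi
  · exact noV_l h hA hab hx hy hz h1 h2 hi

lemma noLam (h : IsSCExt ((· < ·) : S → S → Prop) u l) {a b x y z : S}
    (hA : a ≠ b)
    (hx : x ∈ BSet ((· < ·) : S → S → Prop) u l a b)
    (hy : y ∈ BSet ((· < ·) : S → S → Prop) u l a b)
    (hz : z ∈ BSet ((· < ·) : S → S → Prop) u l a b)
    (h1 : x < y) (h2 : z < y)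
    (hi : Incomp ((· < ·) : S → S → Prop) x z) : False := by
  rcases (h.exactly_one a b hA).1 with hab | hab | hab | hab
  · exact noLam_lt h hab hx hy hz h1 h2 hi
  · refine noLam_lt h hab ?_ ?_ ?_ h1 h2 hi <;> rwa [← bset_comm h]
  · exact noLam_u h hA hab hx hy hz h1 h2 hi
  · exact noLam_l h hA hab hx hy hz h1 h2 hi

end Aux

/-- For `a ≠ b`, the relation `O_{a,b}` is an equivalence relation on `B_{a,b}`. -/
theorem stmt8 {S : Type*} [PartialOrder S] (u l : S → S → Prop)
    (hsce : IsSCExt ((· < ·) : S → S → Prop) u l) (a b : S) (hab : a ≠ b) :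
    (∀ x ∈ BSet ((· < ·) : S → S → Prop) u l a b,
      ORel ((· < ·) : S → S → Prop) u l x x) ∧
    (∀ x ∈ BSet ((· < ·) : S → S → Prop) u l a b,
      ∀ y ∈ BSet ((· < ·) : S → S → Prop) u l a b,
        ORel ((· < ·) : S → S → Prop) u l x y → ORel ((· < ·) : S → S → Prop) u l y x) ∧
    (∀ x ∈ BSet ((· < ·) : S → S → Prop) u l a b,
      ∀ y ∈ BSet ((· < ·) : S → S → Prop) u l a b,
        ∀ z ∈ BSet ((· < ·) : S → S → Prop) u l a b,
          ORel ((· < ·) : S → S → Prop) u l x y → ORel ((· < ·) : S → S → Prop) u l y z →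
            ORel ((· < ·) : S → S → Prop) u l x z) := by
  refine ⟨fun x _ => orel_refl x, fun x _ y _ ho => orel_symm hsce ho, ?_⟩
  intro x hx y hy z hz hxy hyz
  by_cases hxz : x = z
  · subst hxz; exact orel_refl x
  by_cases hxyeq : x = y
  · subst hxyeq; exact hyz
  by_cases hyzeq : y = z
  · subst hyzeq; exact hxy
  have hc1 : x < y ∨ y < x := (comp_of_orel hxy).resolve_left hxyeq
  have hc2 : y < z ∨ z < y := (comp_of_orel hyz).resolve_left hyzeq
  by_cases hlt : x < z
  · exact orel_of_lt hsce hxy hyz hlt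
  by_cases hgt : z < x
  · exact orel_symm hsce (orel_of_lt hsce (orel_symm hsce hyz) (orel_symm hsce hxy) hgt)
  have hi : Incomp ((· < ·) : S → S → Prop) x z := ⟨hxz, hlt, hgt⟩
  exfalso
  rcases hc1 with h1 | h1 <;> rcases hc2 with h2 | h2
  · exact hlt (h1.trans h2)
  · exact noLam hsce hab hx hy hz h1 h2 hi
  · exact noV hsce hab hx hy hz h1 h2 hi
  · exact hgt (h2.trans h1)

end PaperSC
end
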